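/- Column subset selection bound: under the additive-multiplicative spectral bound with 0 < ε < 1/4, the Frobenius-norm error of projecting A onto the column span of C satisfies ‖A − C C⁺ A‖_F² ≤ (1 + 4ε) ‖A − A_k‖_F². -/

import Mathlib

open Matrix BigOperators Finset

noncomputable section

def frobSq {m n : Type*} [Fintype m] [Fintype n] (A : Matrix m n ℝ) : ℝ :=
  ∑ i, ∑ j, (A i j) ^ 2

def loewnerLE {n : Type*} [Fintype n] (M N : Matrix n n ℝ) : Prop :=
  (N - M).PosSemidef

section DrlsHelpers

lemma drls_frobSq_eq_trace {m n : Type*} [Fintype m] [Fintype n] (X : Matrix m n ℝ) :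
    frobSq X = (Xᵀ * X).trace := by
  simp only [frobSq, Matrix.trace, Matrix.diag, Matrix.mul_apply, Matrix.transpose_apply, sq]
  exact Finset.sum_comm

lemma drls_frobSq_nonneg {m n : Type*} [Fintype m] [Fintype n] (X : Matrix m n ℝ) :
    0 ≤ frobSq X :=
  Finset.sum_nonneg fun _ _ => Finset.sum_nonneg fun _ _ => sq_nonneg _

lemma drls_frobSq_transpose {a b : Type*} [Fintype a] [Fintype b] (X : Matrix a b ℝ) :
    frobSq Xᵀ = frobSq X := by
  simp only [frobSq, Matrix.transpose_apply]
  exact Finset.sum_comm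

lemma drls_trace_nonneg {n : Type*} [Fintype n] [DecidableEq n]
    {M : Matrix n n ℝ} (h : M.PosSemidef) : 0 ≤ M.trace := by
  obtain ⟨B, rfl⟩ : ∃ B : Matrix n n ℝ, M = Bᴴ * B := by
    open scoped MatrixOrder in
    obtain ⟨B, rfl⟩ := CStarAlgebra.nonneg_iff_eq_star_mul_self.mp h.nonneg
    exact ⟨B, rfl⟩
  rw [Matrix.conjTranspose_eq_transpose_of_trivial, ← drls_frobSq_eq_trace]
  exact drls_frobSq_nonneg _

lemma drls_trace_mul_nonneg {n : Type*} [Fintype n] [DecidableEq n]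
    {M N : Matrix n n ℝ} (hM : M.PosSemidef) (hN : N.PosSemidef) :
    0 ≤ (M * N).trace := by
  obtain ⟨B, rfl⟩ : ∃ B : Matrix n n ℝ, M = Bᴴ * B := by
    open scoped MatrixOrder in
    obtain ⟨B, rfl⟩ := CStarAlgebra.nonneg_iff_eq_star_mul_self.mp hM.nonneg
    exact ⟨B, rfl⟩
  rw [Matrix.mul_assoc, Matrix.trace_mul_comm]
  exact drls_trace_nonneg (hN.mul_mul_conjTranspose_same B)

lemma drls_trace_mul_cs {m n : Type*} [Fintype m] [Fintype n]
    (X : Matrix m n ℝ) (Y : Matrix n m ℝ) :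
    ((X * Y).trace) ^ 2 ≤ (X * Xᵀ).trace * (Y * Yᵀ).trace := by
  have h := Finset.sum_mul_sq_le_sq_mul_sq Finset.univ
    (fun p : m × n => X p.1 p.2) (fun p : m × n => Y p.2 p.1)
  have e : (Y * Yᵀ).trace = ∑ x : m, ∑ y : n, Y y x * Y y x := by
    simp only [Matrix.trace, Matrix.diag, Matrix.mul_apply, Matrix.transpose_apply]
    exact Finset.sum_comm
  rw [e]
  simpa [Matrix.trace, Matrix.diag, Matrix.mul_apply, Matrix.transpose_apply, sq,
    Fintype.sum_prod_type] using h

lemma drls_psd_smul {n : Type*} [Fintype n] {M : Matrix n n ℝ} (h : M.PosSemidef)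
    {r : ℝ} (hr : 0 ≤ r) : (r • M).PosSemidef := by
  rw [Matrix.posSemidef_iff_dotProduct_mulVec] at h ⊢
  refine ⟨?_, fun x => ?_⟩
  · have := h.1
    simp only [Matrix.IsHermitian] at this ⊢
    rw [Matrix.conjTranspose_smul, this]
    congr 1
  · have h2 := h.2 x
    rw [Matrix.smul_mulVec, dotProduct_smul, smul_eq_mul]
    exact mul_nonneg hr h2

lemma drls_frobSq_proj_left_le {a b : Type*} [Fintype a] [Fintype b] [DecidableEq a]
    (N : Matrix a a ℝ) (hs : Nᵀ = N) (hi : N * N = N) (Y : Matrix a b ℝ) :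
    frobSq (N * Y) ≤ frobSq Y := by
  have hi' : ∀ (Z : Matrix a b ℝ), N * (N * Z) = N * Z := fun Z => by
    rw [← Matrix.mul_assoc, hi]
  have e : Yᵀ * Y - (N * Y)ᵀ * (N * Y) = ((1 - N) * Y)ᵀ * ((1 - N) * Y) := by
    simp only [Matrix.transpose_mul, Matrix.transpose_sub, Matrix.transpose_one, hs,
      Matrix.sub_mul, Matrix.mul_sub, Matrix.one_mul, Matrix.mul_assoc, hi']
    abel
  have h2 := drls_frobSq_nonneg ((1 - N) * Y)
  rw [drls_frobSq_eq_trace, ← e, Matrix.trace_sub] at h2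
  rw [drls_frobSq_eq_trace, drls_frobSq_eq_trace]
  linarith

lemma drls_frobSq_proj_right_le {a b : Type*} [Fintype a] [Fintype b] [DecidableEq b]
    (N : Matrix b b ℝ) (hs : Nᵀ = N) (hi : N * N = N) (Y : Matrix a b ℝ) :
    frobSq (Y * N) ≤ frobSq Y := by
  rw [← drls_frobSq_transpose (Y * N), Matrix.transpose_mul, hs, ← drls_frobSq_transpose Y]
  exact drls_frobSq_proj_left_le N hs hi Yᵀ

lemma drls_exists_orth_proj {a b : Type*} [Fintype a] [Fintype b] [DecidableEq a]
    (X : Matrix a b ℝ) :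
    ∃ Q : Matrix a a ℝ, Qᵀ = Q ∧ Q * Q = Q ∧ Q * X = X ∧
      Q.rank ≤ X.rank ∧ Q.trace = (X.rank : ℝ) := by
  classical
  have hB : (X * Xᴴ).IsHermitian := Matrix.isHermitian_mul_conjTranspose_self X
  set U : Matrix a a ℝ := (hB.eigenvectorUnitary : Matrix a a ℝ) with hU
  set μ : a → ℝ := hB.eigenvalues with hμ
  have hU1 : star U * U = 1 := (Matrix.mem_unitaryGroup_iff').mp (hB.eigenvectorUnitary).2
  have hU2 : U * star U = 1 := (Matrix.mem_unitaryGroup_iff).mp (hB.eigenvectorUnitary).2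
  have hsU : star U = Uᵀ := by
    rw [Matrix.star_eq_conjTranspose, Matrix.conjTranspose_eq_transpose_of_trivial]
  have hspec : X * Xᴴ = U * Matrix.diagonal μ * star U := by
    have := hB.spectral_theorem
    simp [RCLike.ofReal_real_eq_id] at this
    exact this
  have sandwich : ∀ v w : a → ℝ, (U * Matrix.diagonal v * star U) *
      (U * Matrix.diagonal w * star U) = U * Matrix.diagonal (v * w) * star U := by
    intro v w
    simp only [Matrix.mul_assoc]
    rw [← Matrix.mul_assoc (star U) U, hU1, Matrix.one_mul,
      ← Matrix.mul_assoc (Matrix.diagonal v) (Matrix.diagonal w),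
      Matrix.diagonal_mul_diagonal]
    rfl
  set f : a → ℝ := fun i => if μ i ≠ 0 then 1 else 0 with hf
  set Q : Matrix a a ℝ := U * Matrix.diagonal f * star U with hQdef
  have hff : f * f = f := by
    funext i
    by_cases h : μ i = 0 <;> simp [hf, h]
  have hsym : Qᵀ = Q := by
    rw [hQdef, hsU, Matrix.transpose_mul, Matrix.transpose_mul, Matrix.transpose_transpose,
      Matrix.diagonal_transpose, Matrix.mul_assoc]
  have hidem : Q * Q = Q := by rw [hQdef, sandwich, hff]
  have hQX : Q * X = X := by
    set g : a → ℝ := fun i => 1 - f i with hg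
    have e1 : (1 : Matrix a a ℝ) - Q = U * Matrix.diagonal g * star U := by
      have h2 : Matrix.diagonal g = (1 : Matrix a a ℝ) - Matrix.diagonal f := by
        ext i j
        by_cases h : i = j <;> simp [hg, Matrix.diagonal_apply, Matrix.one_apply, h]
      rw [h2, Matrix.mul_sub, Matrix.sub_mul, Matrix.mul_one, hU2, hQdef]
    have hzero : ((1 : Matrix a a ℝ) - Q) * (X * Xᴴ) * ((1 : Matrix a a ℝ) - Q) = 0 := by
      rw [e1, hspec, sandwich, sandwich]
      have hgg : (g * μ) * g = 0 := by
        funext i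
        by_cases h : μ i = 0 <;> simp [hg, hf, h]
      have hd : Matrix.diagonal (g * μ * g) = 0 := by
        rw [hgg]
        ext i j
        simp [Matrix.diagonal_apply]
      rw [hd, Matrix.mul_zero, Matrix.zero_mul]
    have h1 : (((1 : Matrix a a ℝ) - Q) * X) * (((1 : Matrix a a ℝ) - Q) * X)ᴴ = 0 := by
      have hconj : (((1 : Matrix a a ℝ) - Q) * X)ᴴ = Xᴴ * ((1 : Matrix a a ℝ) - Q) := by
        rw [Matrix.conjTranspose_mul, Matrix.conjTranspose_eq_transpose_of_trivial
          ((1 : Matrix a a ℝ) - Q), Matrix.transpose_sub, Matrix.transpose_one, hsym]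
      rw [hconj, ← hzero]
      simp only [Matrix.mul_assoc]
    have h0 : ((1 : Matrix a a ℝ) - Q) * X = 0 :=
      Matrix.self_mul_conjTranspose_eq_zero.mp h1
    have h3 : X - Q * X = 0 := by rw [← h0, Matrix.sub_mul, Matrix.one_mul]
    exact (sub_eq_zero.mp h3).symm
  refine ⟨Q, hsym, hidem, hQX, ?_, ?_⟩
  · calc Q.rank ≤ (U * Matrix.diagonal f).rank := Matrix.rank_mul_le_left _ _
      _ ≤ (Matrix.diagonal f).rank := Matrix.rank_mul_le_right _ _
      _ = Fintype.card {i // f i ≠ 0} := Matrix.rank_diagonal f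
      _ = Fintype.card {i // μ i ≠ 0} := by
          apply Fintype.card_congr
          apply Equiv.subtypeEquivRight
          intro i
          by_cases h : μ i = 0 <;> simp [hf, h]
      _ = (X * Xᴴ).rank := (hB.rank_eq_card_non_zero_eigs).symm
      _ = X.rank := Matrix.rank_self_mul_conjTranspose X
  · have h5 : Q.trace = (Matrix.diagonal f).trace := by
      rw [hQdef, Matrix.trace_mul_comm, ← Matrix.mul_assoc, hU1, Matrix.one_mul]
    rw [h5, Matrix.trace_diagonal]
    have h4 : ∀ i : a, f i = if ¬ μ i = 0 then (1:ℝ) else 0 := by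
      intro i
      by_cases h : μ i = 0 <;> simp [hf, h]
    simp only [h4]
    rw [Finset.sum_boole]
    congr 1
    rw [← Matrix.rank_self_mul_conjTranspose X, hB.rank_eq_card_non_zero_eigs,
      Fintype.card_subtype]

end DrlsHelpers

/-- Column subset selection bound: under the additive-multiplicative spectral bound with
`0 < ε < 1/4`, the Frobenius-norm error of projecting `A` onto the column span of `C = A S`
satisfies `‖A - C C⁺ A‖_F² ≤ (1 + 4ε) ‖A - A_k‖_F²`. -/
theorem drls_column_subset_selection {n d k m : ℕ} (hk : 1 ≤ k)
    (A Ak : Matrix (Fin n) (Fin d) ℝ) (S : Matrix (Fin d) (Fin m) ℝ)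
    (h01 : ∀ i j, S i j = 0 ∨ S i j = 1)
    (hrow : ∀ i j j', S i j = 1 → S i j' = 1 → j = j')
    (hcol : ∀ i i' j, S i j = 1 → S i' j = 1 → i = i')
    (hrank : k ≤ A.rank)
    (hAk_rank : Ak.rank ≤ k)
    (hAk_opt : ∀ B : Matrix (Fin n) (Fin d) ℝ, B.rank ≤ k →
      frobSq (A - Ak) ≤ frobSq (A - B))
    (lam : ℝ) (hlam : lam = 1 / (k : ℝ) * frobSq (A - Ak))
    -- top-`k` singular triplets of `A`, and the assumption `λ ≤ σ_k²`
    (Uk : Matrix (Fin n) (Fin k) ℝ) (Vk : Matrix (Fin d) (Fin k) ℝ) (σ : Fin k → ℝ)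
    (hUk : Ukᵀ * Uk = 1) (hVk : Vkᵀ * Vk = 1)
    (hsvd : A * Vk = Uk * Matrix.diagonal σ)
    (hσ_sorted : ∀ i j : Fin k, i ≤ j → σ j ≤ σ i)
    (hσ_pos : ∀ i, 0 < σ i)
    (hlam_le : ∀ i, lam ≤ (σ i) ^ 2)
    (ε : ℝ) (hε0 : 0 < ε) (hε1 : ε < 1 / 4)
    (hspecL : loewnerLE ((1 - ε) • (A * Aᵀ) - (ε * lam) • 1) ((A * S) * (A * S)ᵀ))
    (hspecR : loewnerLE ((A * S) * (A * S)ᵀ) (A * Aᵀ))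
    -- `Cplus` is the Moore-Penrose pseudoinverse of `C = A S`
    (Cplus : Matrix (Fin m) (Fin n) ℝ)
    (hP1 : (A * S) * Cplus * (A * S) = A * S)
    (hP2 : Cplus * (A * S) * Cplus = Cplus)
    (hP3 : ((A * S) * Cplus)ᵀ = (A * S) * Cplus)
    (hP4 : (Cplus * (A * S))ᵀ = Cplus * (A * S)) :
    frobSq (A - (A * S) * Cplus * A) ≤ (1 + 4 * ε) * frobSq (A - Ak) := by
  classical
  -- notation
  set C : Matrix (Fin n) (Fin m) ℝ := A * S with hCdef
  set P : Matrix (Fin n) (Fin n) ℝ := C * Cplus with hPdef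
  set N : Matrix (Fin n) (Fin n) ℝ := 1 - P with hNdef
  have hPC : P * C = C := hP1
  have hPt : Pᵀ = P := hP3
  have hPP : P * P = P := by
    nth_rewrite 2 [hPdef]
    rw [← Matrix.mul_assoc, hPC]
  have hNt : Nᵀ = N := by rw [hNdef, Matrix.transpose_sub, Matrix.transpose_one, hPt]
  have hNN : N * N = N := by
    rw [hNdef, Matrix.sub_mul, Matrix.one_mul, Matrix.mul_sub, Matrix.mul_one, hPP]
    abel
  have hNC : N * C = 0 := by
    rw [hNdef, Matrix.sub_mul, Matrix.one_mul, hPC, sub_self]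
  -- the error matrix is `N * A`
  have hgoal : A - P * A = N * A := by
    rw [hNdef, Matrix.sub_mul, Matrix.one_mul]
  rw [hgoal]
  -- numbers
  set F : ℝ := frobSq (A - Ak) with hFdef
  have hF0 : 0 ≤ F := drls_frobSq_nonneg _
  have hk0 : (0:ℝ) < (k:ℝ) := by exact_mod_cast Nat.lt_of_lt_of_le Nat.zero_lt_one hk
  have hkF : (k:ℝ) * lam = F := by
    rw [hlam]
    field_simp
  have hlam0 : 0 ≤ lam := by
    rw [hlam]
    exact mul_nonneg (by positivity) hF0
  have h1ε : (0:ℝ) < 1 - ε := by linarith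
  set c : ℝ := ε * lam / (1 - ε) with hcdef
  have hc0 : 0 ≤ c := div_nonneg (mul_nonneg hε0.le hlam0) h1ε.le
  -- the projector onto the row space of Ak
  obtain ⟨Q, hQt, hQQ, hQAk, hQrank, -⟩ := drls_exists_orth_proj (Akᵀ)
  have hAkQ : Ak * Q = Ak := by
    have h := congrArg Matrix.transpose hQAk
    rwa [Matrix.transpose_mul, Matrix.transpose_transpose, hQt] at h
  set G : Matrix (Fin n) (Fin d) ℝ := N * A * Q with hGdef
  set S0 : Matrix (Fin n) (Fin n) ℝ := G * Gᵀ with hS0def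
  -- key spectral consequence: (1-ε) • (N A Aᵀ N) ⪯ (ε lam) • N
  have hNCC : N * (C * (Cᵀ * N)) = 0 := by
    rw [← Matrix.mul_assoc, hNC, Matrix.zero_mul]
  have hK : ((ε * lam) • N - (1 - ε) • (N * (A * Aᵀ) * N)).PosSemidef := by
    have h : ((C * Cᵀ) - ((1 - ε) • (A * Aᵀ) - (ε * lam) • 1)).PosSemidef := by
      have h2 : Cᵀ = (A * S)ᵀ := by rw [hCdef]
      rw [hCdef] at hspecL ⊢
      exact hspecL
    have h2 := h.mul_mul_conjTranspose_same N
    have h3 : Nᴴ = N := by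
      rw [Matrix.conjTranspose_eq_transpose_of_trivial, hNt]
    rw [h3] at h2
    have h4 : N * ((C * Cᵀ) - ((1 - ε) • (A * Aᵀ) - (ε * lam) • 1)) * N
        = (ε * lam) • N - (1 - ε) • (N * (A * Aᵀ) * N) := by
      simp only [Matrix.mul_sub, Matrix.sub_mul, Matrix.mul_smul, Matrix.smul_mul,
        Matrix.mul_one, Matrix.one_mul, Matrix.mul_assoc, hNCC, hNN, Matrix.zero_mul]
      abel
    rw [h4] at h2
    exact h2
  -- S0 is PSD
  have hGGt : Gᵀ = Q * (Aᵀ * N) := by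
    rw [hGdef, Matrix.transpose_mul, Matrix.transpose_mul, hQt, hNt]
  have hS0psd : S0.PosSemidef := by
    have := Matrix.posSemidef_self_mul_conjTranspose G
    rwa [Matrix.conjTranspose_eq_transpose_of_trivial] at this
  have hS0t : S0ᵀ = S0 := by
    rw [hS0def, Matrix.transpose_mul, Matrix.transpose_transpose]
  -- S0 in right-associated canonical form
  have hS0can : S0 = N * (A * (Q * (Aᵀ * N))) := by
    rw [hS0def, hGGt, hGdef]
    simp only [Matrix.mul_assoc]
    rw [← Matrix.mul_assoc Q Q, hQQ]
  have hNS0 : N * S0 = S0 := by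
    rw [hS0can, ← Matrix.mul_assoc, hNN]
  have hS0N : S0 * N = S0 := by
    have h := congrArg Matrix.transpose hNS0
    rwa [Matrix.transpose_mul, hNt, hS0t] at h
  -- `S0 ⪯ N (A Aᵀ) N`
  have hNabs : ∀ {b : Type} [Fintype b] (X : Matrix (Fin n) b ℝ), N * (N * X) = N * X := by
    intro b _ X
    rw [← Matrix.mul_assoc, hNN]
  have h1Qt : ((1 : Matrix (Fin d) (Fin d) ℝ) - Q)ᵀ = 1 - Q := by
    rw [Matrix.transpose_sub, Matrix.transpose_one, hQt]
  have h1Q1Q : ((1 : Matrix (Fin d) (Fin d) ℝ) - Q) * (1 - Q) = 1 - Q := by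
    rw [Matrix.sub_mul, Matrix.one_mul, Matrix.mul_sub, Matrix.mul_one, hQQ]
    abel
  have h1QQ : ((1 : Matrix (Fin d) (Fin d) ℝ) - Q) * Q = 0 := by
    rw [Matrix.sub_mul, Matrix.one_mul, hQQ, sub_self]
  have hM2S0 : (N * (A * Aᵀ) * N - S0).PosSemidef := by
    have hRt : (N * (A * (1 - Q)))ᵀ = (1 - Q) * (Aᵀ * N) := by
      rw [Matrix.transpose_mul, Matrix.transpose_mul, h1Qt, hNt, Matrix.mul_assoc]
    have hR : N * (A * Aᵀ) * N - S0 = (N * (A * (1 - Q))) * (N * (A * (1 - Q)))ᵀ := by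
      rw [hRt, hS0can]
      simp only [Matrix.mul_assoc]
      rw [← Matrix.mul_assoc (1 - Q) (1 - Q), h1Q1Q]
      simp only [Matrix.sub_mul, Matrix.mul_sub, Matrix.one_mul]
    rw [hR]
    have := Matrix.posSemidef_self_mul_conjTranspose (N * (A * (1 - Q)))
    rwa [Matrix.conjTranspose_eq_transpose_of_trivial] at this
  have hcNS0 : (c • N - S0).PosSemidef := by
    have h1 : ((1/(1-ε)) • ((ε * lam) • N - (1 - ε) • (N * (A * Aᵀ) * N))).PosSemidef :=
      drls_psd_smul hK (le_of_lt (one_div_pos.mpr h1ε))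
    have h2 : (1/(1-ε)) • ((ε * lam) • N - (1 - ε) • (N * (A * Aᵀ) * N))
        = c • N - N * (A * Aᵀ) * N := by
      rw [smul_sub, smul_smul, smul_smul]
      congr 1
      · congr 1
        rw [hcdef]
        field_simp
      · rw [show (1/(1-ε)) * (1-ε) = 1 by field_simp, one_smul]
    rw [h2] at h1
    have h3 : c • N - S0 = (c • N - N * (A * Aᵀ) * N) + (N * (A * Aᵀ) * N - S0) := by abel
    rw [h3]
    exact h1.add hM2S0
  set t : ℝ := S0.trace with htdef
  have ht0 : 0 ≤ t := drls_trace_nonneg hS0psd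
  have hS0sq : (S0 * S0).trace ≤ c * t := by
    have h := drls_trace_mul_nonneg hS0psd hcNS0
    rw [Matrix.mul_sub, Matrix.trace_sub, Matrix.mul_smul, Matrix.trace_smul, hS0N] at h
    simp only [smul_eq_mul] at h
    linarith
  -- the projector onto the column space of G
  obtain ⟨Pi, hPit, hPiPi, hPiG, hPirank, hPitr⟩ := drls_exists_orth_proj G
  have hrankG : (G.rank : ℝ) ≤ (k : ℝ) := by
    have h1 : G.rank ≤ Q.rank := by
      rw [hGdef]
      exact Matrix.rank_mul_le_right (N * A) Q
    have h2 : Q.rank ≤ Ak.rank := le_trans hQrank (le_of_eq (Matrix.rank_transpose Ak))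
    exact_mod_cast le_trans h1 (le_trans h2 hAk_rank)
  have htrPi0 : 0 ≤ Pi.trace := by rw [hPitr]; exact Nat.cast_nonneg _
  have htrPik : Pi.trace ≤ (k:ℝ) := by rw [hPitr]; exact hrankG
  have htPi : (S0 * Pi).trace = t := by
    rw [Matrix.trace_mul_comm]
    have h : Pi * S0 = S0 := by rw [hS0def, ← Matrix.mul_assoc, hPiG]
    rw [h]
  have hcs := drls_trace_mul_cs S0 Pi
  rw [htPi, hS0t] at hcs
  have hPiPit : Pi * Piᵀ = Pi := by rw [hPit, hPiPi]
  rw [hPiPit] at hcs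
  have hS0S0 : 0 ≤ (S0 * S0).trace := by
    have h : (S0 * S0).trace = frobSq S0 := by
      rw [drls_frobSq_eq_trace, hS0t]
    rw [h]
    exact drls_frobSq_nonneg _
  have ht2 : t^2 ≤ (c * t) * (k:ℝ) :=
    le_trans hcs (mul_le_mul hS0sq htrPik htrPi0 (mul_nonneg hc0 ht0))
  have htck : t ≤ c * (k:ℝ) := by
    rcases eq_or_lt_of_le ht0 with h | h
    · exact le_trans h.symm.le (mul_nonneg hc0 hk0.le)
    · refine le_of_mul_le_mul_right ?_ h
      calc t * t = t^2 := by ring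
        _ ≤ (c * t) * (k:ℝ) := ht2
        _ = (c * (k:ℝ)) * t := by ring
  -- Pythagoras split
  set Y : Matrix (Fin n) (Fin d) ℝ := N * A - G with hYdef
  have hYeq : Y = N * (A * (1 - Q)) := by
    rw [hYdef, hGdef, Matrix.mul_sub, Matrix.mul_sub, Matrix.mul_one, Matrix.mul_assoc]
  have hNA : N * A = G + Y := by rw [hYdef]; abel
  have hcross : (Gᵀ * Y).trace = 0 := by
    have hGY : Gᵀ * Y = (Q * (Aᵀ * (N * A))) * (1 - Q) := by
      rw [hYeq, hGGt]
      simp only [Matrix.mul_assoc]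
      rw [hNabs]
    rw [hGY, Matrix.trace_mul_comm, ← Matrix.mul_assoc, h1QQ, Matrix.zero_mul,
      Matrix.trace_zero]
  have hsplit : frobSq (N * A) = frobSq G + frobSq Y := by
    rw [drls_frobSq_eq_trace, hNA, Matrix.transpose_add, Matrix.add_mul, Matrix.mul_add,
      Matrix.mul_add, Matrix.trace_add, Matrix.trace_add, Matrix.trace_add]
    have hYG : (Yᵀ * G).trace = 0 := by
      have h : Yᵀ * G = (Gᵀ * Y)ᵀ := by
        rw [Matrix.transpose_mul, Matrix.transpose_transpose]
      rw [h, Matrix.trace_transpose, hcross]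
    rw [hcross, hYG, drls_frobSq_eq_trace G, drls_frobSq_eq_trace Y]
    ring
  -- bound the two pieces
  have hfG : frobSq G = t := by
    rw [drls_frobSq_eq_trace, Matrix.trace_mul_comm, htdef, hS0def]
  have hfY : frobSq Y ≤ F := by
    have h1 : frobSq Y ≤ frobSq (A * (1 - Q)) := by
      rw [hYeq]
      exact drls_frobSq_proj_left_le N hNt hNN _
    have hA1Q : A * (1 - Q) = (A - Ak) * (1 - Q) := by
      have h0 : Ak * (1 - Q) = 0 := by
        rw [Matrix.mul_sub, Matrix.mul_one, hAkQ, sub_self]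
      rw [Matrix.sub_mul, h0, sub_zero]
    have h2 : frobSq ((A - Ak) * (1 - Q)) ≤ F := by
      rw [hFdef]
      exact drls_frobSq_proj_right_le _ h1Qt h1Q1Q _
    rw [hA1Q] at h1
    exact le_trans h1 h2
  -- conclude
  have hck : c * (k:ℝ) = ε * F / (1 - ε) := by
    rw [hcdef, ← hkF]
    ring
  clear_value F t c C P N G S0 Y
  have hfinal : ε * F / (1 - ε) ≤ 4 * ε * F := by
    rw [div_le_iff₀ h1ε]
    have h3 : (0:ℝ) ≤ 3 - 4 * ε := by linarith
    have h5 : 0 ≤ ε * F * (3 - 4 * ε) := mul_nonneg (mul_nonneg hε0.le hF0) h3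
    linarith [h5]
  calc frobSq (N * A) = frobSq G + frobSq Y := hsplit
    _ ≤ c * (k:ℝ) + F := by
        rw [hfG]
        exact add_le_add htck hfY
    _ ≤ 4 * ε * F + F := by
        rw [hck]
        exact add_le_add_left hfinal F
    _ = (1 + 4 * ε) * F := by ring
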